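/- There is a constant M (depending only on the finite generating set C) such that for every n, if (f,0) ∈ Z[1/p] ⊂ G lies in the ball B(n), then |f| ≤ M·|p|^{nc/4} or denom(f) ≤ M·|p|^{nc/4}, where c = max{|c_i| : (f_i,c_i) ∈ C}. -/

import Mathlib

namespace BS

/-- `Zp p` is the set of `p`-adic fractions `m / p^n` inside `ℚ`, i.e. `ℤ[1/p]`. -/
def Zp (p : ℤ) : Set ℚ := {q | ∃ (m : ℤ) (n : ℕ), q = (m : ℚ) / (p : ℚ) ^ n}

lemma zero_mem (p : ℤ) : (0 : ℚ) ∈ Zp p := ⟨0, 0, by norm_num⟩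

lemma one_mem (p : ℤ) : (1 : ℚ) ∈ Zp p := ⟨1, 0, by norm_num⟩

lemma cast_ne_zero {p : ℤ} (h : 1 < |p|) : (p : ℚ) ≠ 0 := by
  have hp : p ≠ 0 := by rintro rfl; simp at h
  exact_mod_cast hp

lemma neg_mem {p : ℤ} {q : ℚ} (hq : q ∈ Zp p) : -q ∈ Zp p := by
  obtain ⟨m, n, rfl⟩ := hq
  exact ⟨-m, n, by push_cast; ring⟩

lemma add_mem {p : ℤ} (hp : (p : ℚ) ≠ 0) {q r : ℚ} (hq : q ∈ Zp p) (hr : r ∈ Zp p) :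
    q + r ∈ Zp p := by
  obtain ⟨m1, n1, rfl⟩ := hq
  obtain ⟨m2, n2, rfl⟩ := hr
  refine ⟨m1 * p ^ n2 + m2 * p ^ n1, n1 + n2, ?_⟩
  push_cast
  field_simp
  rw [pow_add]; ring

lemma zpow_mul_mem {p : ℤ} (hp : (p : ℚ) ≠ 0) (e : ℤ) {q : ℚ} (hq : q ∈ Zp p) :
    (p : ℚ) ^ e * q ∈ Zp p := by
  obtain ⟨m, n, rfl⟩ := hq
  obtain ⟨k, hk | hk⟩ := e.eq_nat_or_neg
  · subst hk
    refine ⟨m * p ^ k, n, ?_⟩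
    push_cast [zpow_natCast]
    field_simp
  · subst hk
    refine ⟨m, n + k, ?_⟩
    rw [zpow_neg, zpow_natCast]
    push_cast
    field_simp
    rw [pow_add]; ring

lemma zpow_mem {p : ℤ} (hp : (p : ℚ) ≠ 0) (e : ℤ) : (p : ℚ) ^ e ∈ Zp p := by
  simpa using zpow_mul_mem hp e (one_mem p)

lemma sub_mem {p : ℤ} (hp : (p : ℚ) ≠ 0) {q r : ℚ} (hq : q ∈ Zp p) (hr : r ∈ Zp p) :
    q - r ∈ Zp p := by
  simpa [sub_eq_add_neg] using add_mem hp hq (neg_mem hr)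

/-- The underlying type of the semidirect product `ℚ ⋊ ℤ` (with `ℤ` acting by
multiplication by `p`); `f` is the `ℚ`-coordinate and `c` the `ℤ`-coordinate. -/
@[ext] structure QZ (p : ℤ) where
  f : ℚ
  c : ℤ

instance (p : ℤ) [hF : Fact (1 < |p|)] : Group (QZ p) where
  mul x y := ⟨x.f + (p : ℚ) ^ (-x.c) * y.f, x.c + y.c⟩
  one := ⟨0, 0⟩
  inv x := ⟨-((p : ℚ) ^ x.c * x.f), -x.c⟩
  mul_assoc x y z := by
    have hp := cast_ne_zero hF.out
    refine QZ.ext ?_ ?_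
    · show (x.f + (p : ℚ) ^ (-x.c) * y.f) + (p : ℚ) ^ (-(x.c + y.c)) * z.f
        = x.f + (p : ℚ) ^ (-x.c) * (y.f + (p : ℚ) ^ (-y.c) * z.f)
      rw [neg_add, zpow_add₀ hp]
      ring
    · show (x.c + y.c) + z.c = x.c + (y.c + z.c); ring
  one_mul x := by
    refine QZ.ext ?_ ?_
    · show (0 : ℚ) + (p : ℚ) ^ (-(0 : ℤ)) * x.f = x.f
      simp
    · show (0 : ℤ) + x.c = x.c; simp
  mul_one x := by
    refine QZ.ext ?_ ?_
    · show x.f + (p : ℚ) ^ (-x.c) * 0 = x.f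
      simp
    · show x.c + (0 : ℤ) = x.c; simp
  inv_mul_cancel x := by
    have hp := cast_ne_zero hF.out
    refine QZ.ext ?_ ?_
    · show -((p : ℚ) ^ x.c * x.f) + (p : ℚ) ^ (-(-x.c)) * x.f = 0
      rw [neg_neg]
      ring
    · show -x.c + x.c = (0 : ℤ); ring

@[simp] lemma mul_f {p : ℤ} [Fact (1 < |p|)] (x y : QZ p) :
    (x * y).f = x.f + (p : ℚ) ^ (-x.c) * y.f := rfl

@[simp] lemma mul_c {p : ℤ} [Fact (1 < |p|)] (x y : QZ p) : (x * y).c = x.c + y.c := rfl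

@[simp] lemma one_f {p : ℤ} [Fact (1 < |p|)] : (1 : QZ p).f = 0 := rfl
@[simp] lemma one_c {p : ℤ} [Fact (1 < |p|)] : (1 : QZ p).c = 0 := rfl
@[simp] lemma inv_f {p : ℤ} [Fact (1 < |p|)] (x : QZ p) :
    (x⁻¹).f = -((p : ℚ) ^ x.c * x.f) := rfl
@[simp] lemma inv_c {p : ℤ} [Fact (1 < |p|)] (x : QZ p) : (x⁻¹).c = -x.c := rfl

/-- The group `G = ℤ[1/p] ⋊ ℤ`, as a subgroup of `ℚ ⋊ ℤ`. -/
def HZ (p : ℤ) [hF : Fact (1 < |p|)] : Subgroup (QZ p) where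
  carrier := {x | x.f ∈ Zp p}
  mul_mem' {a b} ha hb :=
    add_mem (cast_ne_zero hF.out) ha (zpow_mul_mem (cast_ne_zero hF.out) _ hb)
  one_mem' := zero_mem p
  inv_mem' {a} ha := neg_mem (zpow_mul_mem (cast_ne_zero hF.out) _ ha)

/-- Build an element of `ℤ[1/p] ⋊ ℤ`. -/
def mk {p : ℤ} [Fact (1 < |p|)] (f : ℚ) (c : ℤ) (h : f ∈ Zp p) : HZ p := ⟨⟨f, c⟩, h⟩

/-- The ball of radius `n` in the Cayley graph of a group with generating set `C`. -/
def ball {H : Type*} [Group H] (C : Set H) (n : ℕ) : Set H :=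
  {g | ∃ l : List H, (∀ x ∈ l, x ∈ C) ∧ l.prod = g ∧ l.length ≤ n}

/-- `C` generates the group `H`. -/
def Generates {H : Type*} [Group H] (C : Set H) : Prop :=
  ∀ g : H, ∃ l : List H, (∀ x ∈ l, x ∈ C) ∧ l.prod = g

/-- `C` is symmetric (closed under inverses). -/
def Symm {H : Type*} [Group H] (C : Set H) : Prop := ∀ x ∈ C, x⁻¹ ∈ C

/-- Word length with respect to the generating set `C`. -/
noncomputable def wl {H : Type*} [Group H] (C : Set H) (g : H) : ℕ :=
  sInf {n | g ∈ ball C n}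

/-- `G` is almost convex with respect to `C`: for every `k` there is `N` such that any two
points of `B(n)` at distance at most `k` are joined by a path of length at most `N`
staying inside `B(n)`. -/
def AlmostConvex {H : Type*} [Group H] (C : Set H) : Prop :=
  ∀ k : ℕ, ∃ N : ℕ, ∀ n : ℕ, ∀ g g' : H, g ∈ ball C n → g' ∈ ball C n →
    g⁻¹ * g' ∈ ball C k →
    ∃ l : List H, (∀ x ∈ l, x ∈ C) ∧ l.prod = g⁻¹ * g' ∧ l.length ≤ N ∧
      ∀ m : ℕ, g * (l.take m).prod ∈ ball C n

/-- The least `n` such that `p^n * h` is an integer. -/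
noncomputable def denomExp (p : ℤ) (h : ℚ) : ℕ :=
  sInf {n | ∃ m : ℤ, (p : ℚ) ^ n * h = (m : ℚ)}

/-- `denom h = |p|^n` for the least `n ≥ 0` with `p^n h ∈ ℤ`. -/
noncomputable def denom (p : ℤ) (h : ℚ) : ℚ := (|p| : ℚ) ^ denomExp p h

/-- The relator of the Baumslag–Solitar group `B(1,p)`: here `true` plays the role of
the generator `a` and `false` that of `t`, and the relator is `t⁻¹ a t (a^p)⁻¹`. -/
def bsRels (p : ℤ) : Set (FreeGroup Bool) :=
  {(FreeGroup.of false)⁻¹ * FreeGroup.of true * FreeGroup.of false *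
    (FreeGroup.of true ^ p)⁻¹}

/-- The Baumslag–Solitar group `B(1,p) = ⟨a, t ∣ t⁻¹ a t = a^p⟩`. -/
abbrev BSG (p : ℤ) := PresentedGroup (bsRels p)

/-- The generator `a` of `B(1,p)`. -/
def bsa (p : ℤ) : BSG p := PresentedGroup.of true

/-- The generator `t` of `B(1,p)`. -/
def bst (p : ℤ) : BSG p := PresentedGroup.of false



section AuxLemmas

open Finset

private lemma geo_aux (P : ℝ) (hP : 2 ≤ P) (t : ℕ) (E : ℤ) (e : ℕ → ℤ)
    (he : ∀ i < t, e i ≤ E - i) :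
    ∑ i ∈ Finset.range t, P ^ e i ≤ 2 * P ^ E := by
  have hP1 : (1:ℝ) ≤ P := by linarith
  have hP0 : (0:ℝ) < P := by linarith
  calc ∑ i ∈ Finset.range t, P ^ e i
      ≤ ∑ i ∈ Finset.range t, P ^ E * ((1:ℝ)/2) ^ i := by
        apply Finset.sum_le_sum
        intro i hi
        have h1 : P ^ e i ≤ P ^ (E - (i:ℤ)) :=
          zpow_le_zpow_right₀ hP1 (he i (Finset.mem_range.mp hi))
        have h2 : P ^ (E - (i:ℤ)) = P ^ E * (P ^ i)⁻¹ := by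
          rw [sub_eq_add_neg, zpow_add₀ (ne_of_gt hP0), zpow_neg, zpow_natCast]
        have h3 : (P ^ i)⁻¹ ≤ ((1:ℝ)/2) ^ i := by
          rw [one_div, ← inv_pow]
          apply pow_le_pow_left₀ (by positivity)
          rw [inv_le_inv₀ hP0 (by norm_num)]
          exact hP
        calc P ^ e i ≤ P ^ E * (P ^ i)⁻¹ := by rw [← h2]; exact h1
          _ ≤ P ^ E * ((1:ℝ)/2) ^ i := by
            apply mul_le_mul_of_nonneg_left h3 (le_of_lt (zpow_pos hP0 E))
    _ = P ^ E * ∑ i ∈ Finset.range t, ((1:ℝ)/2) ^ i := by rw [Finset.mul_sum]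
    _ ≤ P ^ E * 2 := by
        apply mul_le_mul_of_nonneg_left (sum_geometric_two_le t) (le_of_lt (zpow_pos hP0 E))
    _ = 2 * P ^ E := by ring

private lemma zpow_le_rpow_aux (P : ℝ) (hP : 2 ≤ P) (a : ℤ) (x : ℝ) (h : (a:ℝ) ≤ x) :
    P ^ a ≤ P ^ x := by
  rw [← Real.rpow_intCast P a]
  exact Real.rpow_le_rpow_of_exponent_le (by linarith) h

private lemma half_sum (P : ℝ) (hP : 2 ≤ P) (c : ℤ) (hc : 1 ≤ c) (j : ℕ) (s : ℕ → ℤ) (B : ℤ)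
    (hB0 : 0 ≤ B) (hjc : B ≤ (j:ℤ) * c)
    (h1 : ∀ i ≤ j, -s i ≤ (i:ℤ) * c)
    (h2 : ∀ i ≤ j, -s i ≤ ((j:ℤ) - i) * c - B) :
    ∑ i ∈ Finset.range (j+1), P ^ (-(s i)) ≤ 4 * P ^ (((j:ℝ) * c - B)/2) := by
  have hex : ∃ q : ℕ, q ≤ j + 1 ∧ 2*((q:ℤ)-1)*c ≤ (j:ℤ)*c - B ∧ (j:ℤ)*c - B ≤ 2*(q:ℤ)*c := by
    have hjcB : 0 ≤ (j:ℤ)*c - B := sub_nonneg.mpr hjc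
    set a : ℕ := ((j:ℤ) * c - B).toNat with ha
    set d : ℕ := (2*c).toNat with hd
    have hdpos : 0 < d := by omega
    have hacast : (a : ℤ) = (j:ℤ)*c - B := Int.toNat_of_nonneg hjcB
    have hdcast : (d : ℤ) = 2*c := Int.toNat_of_nonneg (by omega)
    refine ⟨a / d + 1, ?_, ?_, ?_⟩
    · have had : a ≤ j * d := by
        have : (a:ℤ) ≤ (j:ℤ) * (d:ℤ) := by rw [hacast, hdcast]; nlinarith
        exact_mod_cast this
      have : a / d ≤ (j * d) / d := Nat.div_le_div_right had
      rw [Nat.mul_div_cancel j hdpos] at this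
      omega
    · have h2' : ((a/d : ℕ) : ℤ) * ((d:ℕ):ℤ) ≤ (a:ℤ) := by
        exact_mod_cast Nat.div_mul_le_self a d
      rw [hacast, hdcast] at h2'
      push_cast at h2' ⊢
      linarith
    · have h3 : a < (a/d + 1) * d := (Nat.div_lt_iff_lt_mul hdpos).mp (Nat.lt_succ_self (a/d))
      have h3' : (a:ℤ) < ((a/d + 1 : ℕ) : ℤ) * ((d:ℕ):ℤ) := by exact_mod_cast h3
      rw [hacast, hdcast] at h3'
      push_cast at h3' ⊢
      linarith
  obtain ⟨q, hqj, key1, key2⟩ := hex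
  have hP0 : (0:ℝ) < P := by linarith
  set r : ℕ := j + 1 - q with hr
  have hsplit : j + 1 = q + r := by omega
  have part1 : ∑ i ∈ Finset.range q, P ^ (-(s i)) ≤ 2 * P ^ (((q:ℤ)-1)*c) := by
    rw [← Finset.sum_range_reflect]
    apply geo_aux P hP
    intro i hi
    have hle : q - 1 - i ≤ j := by omega
    have h1' := h1 (q-1-i) hle
    have hcast : ((q-1-i : ℕ) : ℤ) = (q:ℤ) - 1 - i := by omega
    rw [hcast] at h1'
    nlinarith [h1', hc]
  have part2 : ∑ i ∈ Finset.range r, P ^ (-(s (q+i))) ≤ 2 * P ^ (((j:ℤ) - q)*c - B) := by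
    apply geo_aux P hP
    intro i hi
    have hle : q + i ≤ j := by omega
    have h2' := h2 (q+i) hle
    push_cast at h2'
    nlinarith [h2', hc]
  have expo1 : (((((q:ℤ)-1)*c : ℤ)) : ℝ) ≤ ((j:ℝ) * c - B)/2 := by
    have : ((2*((q:ℤ)-1)*c : ℤ) : ℝ) ≤ (((j:ℤ)*c - B : ℤ) : ℝ) := by exact_mod_cast key1
    push_cast at this ⊢
    linarith
  have expo2 : (((((j:ℤ) - q)*c - B : ℤ)) : ℝ) ≤ ((j:ℝ) * c - B)/2 := by
    have : (((j:ℤ)*c - B : ℤ) : ℝ) ≤ ((2*(q:ℤ)*c : ℤ) : ℝ) := by exact_mod_cast key2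
    push_cast at this ⊢
    linarith
  calc ∑ i ∈ Finset.range (j+1), P ^ (-(s i))
      = ∑ i ∈ Finset.range q, P ^ (-(s i)) + ∑ i ∈ Finset.range r, P ^ (-(s (q+i))) := by
        rw [hsplit, Finset.sum_range_add]
    _ ≤ 2 * P ^ (((q:ℤ)-1)*c) + 2 * P ^ (((j:ℤ) - q)*c - B) := add_le_add part1 part2
    _ ≤ 2 * P ^ (((j:ℝ) * c - B)/2) + 2 * P ^ (((j:ℝ) * c - B)/2) := by
        gcongr
        · exact zpow_le_rpow_aux P hP _ _ expo1
        · exact zpow_le_rpow_aux P hP _ _ expo2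
    _ = 4 * P ^ (((j:ℝ) * c - B)/2) := by ring

private lemma lip_aux (s : ℕ → ℤ) (c : ℤ) (m : ℕ) (hstep : ∀ i < m, |s (i+1) - s i| ≤ c) :
    ∀ d i, i + d ≤ m → |s (i+d) - s i| ≤ (d:ℤ) * c := by
  intro d
  induction d with
  | zero => intro i _; simp
  | succ k ih =>
    intro i hik
    have h1 := ih i (by omega)
    have h2 := hstep (i+k) (by omega)
    have : |s (i + (k+1)) - s i| ≤ |s (i+k+1) - s (i+k)| + |s (i+k) - s i| := by
      have : s (i + (k+1)) - s i = (s (i+k+1) - s (i+k)) + (s (i+k) - s i) := by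
        have : i + (k+1) = i + k + 1 := by omega
        rw [this]; ring
      rw [this]
      exact abs_add_le _ _
    push_cast
    have hc0 : 0 ≤ c := le_trans (abs_nonneg _) h2
    nlinarith

private lemma core_sum (P : ℝ) (hP : 2 ≤ P) (c : ℤ) (hc : 1 ≤ c) (m : ℕ) (s : ℕ → ℤ)
    (hs0 : s 0 = 0) (hsm : s m = 0) (hstep : ∀ i < m, |s (i+1) - s i| ≤ c)
    (B : ℤ) (hB : ∀ i ≤ m, s i ≤ B) (j : ℕ) (hjm : j ≤ m) (hjB : s j = B) :
    ∑ i ∈ Finset.range (m+1), P ^ (-(s i)) ≤ 8 * P ^ (((m:ℝ) * c)/2 - (B:ℝ)) := by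
  have hP0 : (0:ℝ) < P := by linarith
  have hlip := lip_aux s c m hstep
  have hB0 : 0 ≤ B := hs0 ▸ hB 0 (Nat.zero_le m)
  have hBjc : B ≤ (j:ℤ) * c := by
    have := hlip j 0 (by omega)
    simp only [Nat.zero_add, hs0, hjB, sub_zero] at this
    exact le_trans (le_abs_self _) this
  have hBmj : B ≤ ((m:ℤ) - j) * c := by
    have := hlip (m - j) j (by omega)
    have hmj : j + (m - j) = m := by omega
    rw [hmj, hsm, hjB] at this
    have h' : |(0:ℤ) - B| = B := by rw [zero_sub, abs_neg, abs_of_nonneg hB0]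
    rw [h'] at this
    have : B ≤ ((m - j : ℕ) : ℤ) * c := this
    have hcast : ((m - j : ℕ) : ℤ) = (m:ℤ) - j := by omega
    rwa [hcast] at this
  have cover : ∑ i ∈ Finset.range (m+1), P ^ (-(s i)) ≤
      ∑ i ∈ Finset.range (j+1), P ^ (-(s i)) +
      ∑ t ∈ Finset.range ((m-j)+1), P ^ (-(s (m - t))) := by
    have himg : ∑ t ∈ Finset.range ((m-j)+1), P ^ (-(s (m - t)))
        = ∑ i ∈ (Finset.range ((m-j)+1)).image (fun t => m - t), P ^ (-(s i)) := by
      rw [Finset.sum_image]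
      intro x hx y hy hxy
      simp only [Finset.mem_coe, Finset.mem_range] at hx hy hxy
      omega
    rw [himg]
    have hsub : Finset.range (m+1) ⊆ Finset.range (j+1) ∪
        (Finset.range ((m-j)+1)).image (fun t => m - t) := by
      intro i hi
      simp only [Finset.mem_range, Finset.mem_union, Finset.mem_image] at hi ⊢
      by_cases h : i ≤ j
      · exact Or.inl (by omega)
      · exact Or.inr ⟨m - i, by omega, by omega⟩
    calc ∑ i ∈ Finset.range (m+1), P ^ (-(s i))
        ≤ ∑ i ∈ Finset.range (j+1) ∪ (Finset.range ((m-j)+1)).image (fun t => m - t),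
            P ^ (-(s i)) := by
          apply Finset.sum_le_sum_of_subset_of_nonneg hsub
          intro i _ _
          positivity
      _ ≤ _ := by
          have h := Finset.sum_union_inter (s₁ := Finset.range (j+1))
            (s₂ := (Finset.range ((m-j)+1)).image (fun t => m - t)) (f := fun i => P ^ (-(s i)))
          have hnn : (0:ℝ) ≤ ∑ i ∈ Finset.range (j+1) ∩ (Finset.range ((m-j)+1)).image (fun t => m - t), P ^ (-(s i)) := by
            apply Finset.sum_nonneg; intro i _; positivity
          linarith
  have left : ∑ i ∈ Finset.range (j+1), P ^ (-(s i)) ≤ 4 * P ^ (((j:ℝ) * c - B)/2) := by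
    apply half_sum P hP c hc j s B hB0 hBjc
    · intro i hi
      have := hlip i 0 (by omega)
      simp only [Nat.zero_add, hs0, sub_zero] at this
      have h' := neg_abs_le (s i)
      linarith [le_abs_self (s i), neg_le_of_abs_le this]
    · intro i hi
      have h := hlip (j - i) i (by omega)
      have hji : i + (j - i) = j := by omega
      rw [hji, hjB] at h
      have hcast : ((j - i : ℕ) : ℤ) = (j:ℤ) - i := by omega
      rw [hcast] at h
      have := le_abs_self (B - s i)
      linarith
  have right : ∑ t ∈ Finset.range ((m-j)+1), P ^ (-(s (m - t))) ≤
      4 * P ^ ((((m-j:ℕ):ℝ) * c - B)/2) := by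
    apply half_sum P hP c hc (m-j) (fun t => s (m - t)) B hB0
    · have hcast : ((m - j : ℕ) : ℤ) = (m:ℤ) - j := by omega
      rw [hcast]; exact hBmj
    · intro t ht
      have := hlip t (m - t) (by omega)
      have h' : (m - t) + t = m := by omega
      rw [h', hsm] at this
      have h'' : |(0:ℤ) - s (m - t)| = |s (m-t)| := by rw [zero_sub, abs_neg]
      rw [h''] at this
      linarith [neg_le_of_abs_le this]
    · intro t ht
      have h := hlip ((m - t) - j) j (by omega)
      have hj' : j + ((m - t) - j) = m - t := by omega
      rw [hj', hjB] at h
      have hcast : (((m - t) - j : ℕ) : ℤ) = ((m - j : ℕ):ℤ) - t := by omega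
      rw [hcast] at h
      linarith [neg_le_of_abs_le h]
  have e1 : ((j:ℝ) * c - B)/2 ≤ ((m:ℝ) * c)/2 - B := by
    have h1 : ((B:ℤ):ℝ) ≤ (((m:ℤ) - j)*c : ℤ) := by exact_mod_cast hBmj
    push_cast at h1
    linarith
  have e2 : ((((m-j:ℕ)):ℝ) * c - B)/2 ≤ ((m:ℝ) * c)/2 - B := by
    have h1 : ((B:ℤ):ℝ) ≤ (((j:ℤ))*c : ℤ) := by exact_mod_cast hBjc
    have hcast : (((m-j:ℕ)):ℝ) = (m:ℝ) - j := by
      have : ((m - j:ℕ) : ℤ) = (m:ℤ) - j := by omega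
      exact_mod_cast this
    push_cast at h1
    rw [hcast]
    linarith
  have hr1 : P ^ (((j:ℝ) * c - B)/2) ≤ P ^ (((m:ℝ) * c)/2 - (B:ℝ)) :=
    Real.rpow_le_rpow_of_exponent_le (by linarith) e1
  have hr2 : P ^ (((((m-j:ℕ)):ℝ) * c - B)/2) ≤ P ^ (((m:ℝ) * c)/2 - (B:ℝ)) :=
    Real.rpow_le_rpow_of_exponent_le (by linarith) e2
  calc ∑ i ∈ Finset.range (m+1), P ^ (-(s i)) ≤ _ := cover
    _ ≤ 4 * P ^ (((j:ℝ) * c - B)/2) + 4 * P ^ ((((m-j:ℕ):ℝ) * c - B)/2) := add_le_add left right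
    _ ≤ 4 * P ^ (((m:ℝ) * c)/2 - (B:ℝ)) + 4 * P ^ (((m:ℝ) * c)/2 - (B:ℝ)) := by gcongr
    _ = 8 * P ^ (((m:ℝ) * c)/2 - (B:ℝ)) := by ring

lemma prod_c_eq {p : ℤ} [Fact (1 < |p|)] (L : List (QZ p)) :
    L.prod.c = ∑ i ∈ Finset.range L.length, (L.getD i 1).c := by
  induction L with
  | nil => simp [List.prod_nil]
  | cons x L ih =>
    rw [List.prod_cons, mul_c, ih, List.length_cons, Finset.sum_range_succ']
    simp only [List.getD_cons_succ, List.getD_cons_zero]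
    ring

lemma prod_f_eq {p : ℤ} [hF : Fact (1 < |p|)] (L : List (QZ p)) :
    L.prod.f = ∑ i ∈ Finset.range L.length,
      (p:ℚ) ^ (-(∑ k ∈ Finset.range i, (L.getD k 1).c)) * (L.getD i 1).f := by
  have hp := cast_ne_zero hF.out
  induction L with
  | nil => simp [List.prod_nil]
  | cons x L ih =>
    rw [List.prod_cons, mul_f, ih, List.length_cons, Finset.sum_range_succ']
    simp only [List.getD_cons_succ, List.getD_cons_zero, Finset.range_zero,
      Finset.sum_empty, neg_zero, zpow_zero, one_mul]
    rw [Finset.mul_sum, add_comm]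
    congr 1
    apply Finset.sum_congr rfl
    intro i hi
    rw [← mul_assoc, ← zpow_add₀ hp]
    congr 2
    rw [Finset.sum_range_succ']
    simp only [List.getD_cons_succ, List.getD_cons_zero]
    ring

lemma exists_denomExp {p : ℤ} (hp : (p:ℚ) ≠ 0) {f : ℚ} (hf : f ∈ Zp p) :
    ∃ mm : ℤ, (p:ℚ)^(denomExp p f) * f = mm := by
  have hne : {n : ℕ | ∃ m : ℤ, (p:ℚ)^n * f = m}.Nonempty := by
    obtain ⟨m, n, rfl⟩ := hf
    exact ⟨n, m, by field_simp⟩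
  exact Nat.sInf_mem hne

end AuxLemmas

/-- Lemma 1 (first part): there is a constant `M` so that any `(f,0) ∈ B(n)`
satisfies `|f| ≤ M |p|^{nc/4}` or `denom f ≤ M |p|^{nc/4}`. -/
theorem lemma_one_disjunction (p : ℤ) [Fact (1 < |p|)] (C : Set (HZ p))
    (hCfin : C.Finite) (hCsym : Symm C) (hCgen : Generates C)
    (c : ℤ) (hcmax : ∀ g ∈ C, |((g : QZ p)).c| ≤ c) (hcatt : ∃ g ∈ C, |((g : QZ p)).c| = c) :
    ∃ M : ℝ, ∀ n : ℕ, ∀ f : ℚ, ∀ hf : f ∈ Zp p,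
      mk f 0 hf ∈ ball C n →
        ((|f| : ℚ) : ℝ) ≤ M * (|p| : ℝ) ^ (((n : ℝ) * (c : ℝ)) / 4) ∨
        ((denom p f : ℚ) : ℝ) ≤ M * (|p| : ℝ) ^ (((n : ℝ) * (c : ℝ)) / 4) := by
  classical
  have hFa : Fact (1 < |p|) := ‹_›
  have hp2 : (2:ℤ) ≤ |p| := hFa.out
  have hpne := cast_ne_zero hFa.out
  set P : ℝ := ((|p| : ℤ) : ℝ) with hPdef
  have hP : 2 ≤ P := by rw [hPdef]; exact_mod_cast hp2
  have hP0 : (0:ℝ) < P := by linarith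
  have hP1 : (1:ℝ) ≤ P := by linarith
  -- c ≥ 1
  obtain ⟨g0, hg0C, hg0⟩ := hcatt
  have hc0 : 0 ≤ c := hg0 ▸ abs_nonneg _
  have hc1 : 1 ≤ c := by
    rcases lt_or_ge c 1 with h | h
    · exfalso
      have hceq : ∀ g ∈ C, ((g : QZ p)).c = 0 := by
        intro g hg
        have h1 : |((g : QZ p)).c| = 0 :=
          le_antisymm (le_trans (hcmax g hg) (by omega)) (abs_nonneg _)
        exact abs_eq_zero.mp h1
      obtain ⟨l, hlC, hlprod⟩ := hCgen (mk 0 1 (zero_mem p))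
      have h1 : ((l.prod : HZ p) : QZ p).c = 1 := by rw [hlprod]; rfl
      have h2 : ((l.prod : HZ p) : QZ p).c = 0 := by
        have hmap : ((l.prod : HZ p) : QZ p) = (l.map ((HZ p).subtype)).prod :=
          (List.prod_hom l ((HZ p).subtype)).symm
        rw [hmap, prod_c_eq]
        apply Finset.sum_eq_zero
        intro i hi
        simp only [Finset.mem_range, List.length_map] at hi
        have hi' : i < (l.map ((HZ p).subtype)).length := by simpa using hi
        rw [List.getD_eq_getElem _ _ hi', List.getElem_map]
        exact hceq _ (hlC _ (List.getElem_mem _))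
      omega
    · exact h
  -- constants
  set T := hCfin.toFinset with hT
  have hTne : T.Nonempty := ⟨g0, hCfin.mem_toFinset.mpr hg0C⟩
  set Fq : ℚ := (T.image (fun g : HZ p => |((g:QZ p)).f|)).max' (hTne.image _) with hFqdef
  have hFq : ∀ g ∈ C, |((g:QZ p)).f| ≤ Fq := by
    intro g hg
    apply Finset.le_max'
    exact Finset.mem_image_of_mem _ (hCfin.mem_toFinset.mpr hg)
  have hFq0 : 0 ≤ Fq := le_trans (abs_nonneg _) (hFq g0 hg0C)
  set D : ℕ := (T.image (fun g : HZ p => denomExp p ((g:QZ p)).f)).max' (hTne.image _) with hDdef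
  have hD : ∀ g ∈ C, denomExp p ((g:QZ p)).f ≤ D := by
    intro g hg
    apply Finset.le_max'
    exact Finset.mem_image_of_mem _ (hCfin.mem_toFinset.mpr hg)
  refine ⟨8*((Fq:ℝ) + 1) + P ^ (D:ℕ), ?_⟩
  intro n f hf hball
  set M : ℝ := 8*((Fq:ℝ) + 1) + P ^ (D:ℕ) with hMdef
  have hM8 : 8*(Fq:ℝ) ≤ M := by
    have : (0:ℝ) < P ^ (D:ℕ) := by positivity
    rw [hMdef]; push_cast; linarith
  have hMD : P ^ (D:ℕ) ≤ M := by
    have : (0:ℝ) ≤ (Fq:ℝ) := by exact_mod_cast hFq0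
    rw [hMdef]; linarith
  have hPeq : |(p:ℝ)| = P := by rw [hPdef]; push_cast; ring
  rw [hPeq]
  obtain ⟨l, hlC, hlprod, hlen⟩ := hball
  set L : List (QZ p) := l.map ((HZ p).subtype) with hLdef
  set m : ℕ := L.length with hmdef
  have hmn : m ≤ n := by rw [hmdef, hLdef, List.length_map]; exact hlen
  have hLprod : L.prod = (⟨f, 0⟩ : QZ p) := by
    rw [hLdef, List.prod_hom l ((HZ p).subtype), hlprod]; rfl
  set s : ℕ → ℤ := fun i => ∑ k ∈ Finset.range i, (L.getD k 1).c with hsdef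
  have hmem : ∀ i, i < m → ∃ g, g ∈ C ∧ L.getD i 1 = (g : QZ p) := by
    intro i hi
    have hi' : i < L.length := hi
    have hil : i < l.length := by rw [hmdef, hLdef, List.length_map] at hi; exact hi
    rw [List.getD_eq_getElem _ _ hi']
    refine ⟨l[i], hlC _ (List.getElem_mem _), ?_⟩
    exact List.getElem_map _
  have hs0 : s 0 = 0 := by simp [hsdef]
  have hsm : s m = 0 := by
    have := prod_c_eq L
    rw [hLprod] at this
    rw [hsdef]
    exact this.symm
  have hdiff : ∀ i, s (i+1) - s i = (L.getD i 1).c := by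
    intro i
    rw [hsdef]
    simp [Finset.sum_range_succ]
  have hstep : ∀ i < m, |s (i+1) - s i| ≤ c := by
    intro i hi
    obtain ⟨g, hgC, hgi⟩ := hmem i hi
    rw [hdiff i, hgi]
    exact hcmax g hgC
  -- the maximum B
  have hS : ((Finset.range (m+1)).image s).Nonempty := ⟨s 0, Finset.mem_image_of_mem _ (by simp)⟩
  set B : ℤ := ((Finset.range (m+1)).image s).max' hS with hBdef
  have hB : ∀ i ≤ m, s i ≤ B := by
    intro i hi
    apply Finset.le_max'
    exact Finset.mem_image_of_mem _ (Finset.mem_range.mpr (by omega))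
  obtain ⟨j, hjmem, hjB⟩ := Finset.mem_image.mp (Finset.max'_mem _ hS)
  have hjm : j ≤ m := by have := Finset.mem_range.mp hjmem; omega
  have hB0 : 0 ≤ B := hs0 ▸ hB 0 (Nat.zero_le m)
  have hcore := core_sum P hP c hc1 m s hs0 hsm hstep B hB j hjm hjB
  -- the formula for f
  have hfeq : f = ∑ i ∈ Finset.range m, (p:ℚ) ^ (-(s i)) * (L.getD i 1).f := by
    have := prod_f_eq L
    rw [hLprod] at this
    exact this
  have hexp_mono : ∀ x y : ℝ, x ≤ y → P ^ x ≤ P ^ y := fun x y h =>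
    Real.rpow_le_rpow_of_exponent_le hP1 h
  have hrpow_pos : (0:ℝ) < P ^ (((n:ℝ) * (c:ℝ))/4) := Real.rpow_pos_of_pos hP0 _
  by_cases hcase : (m:ℤ)*c ≤ 4*B
  · -- |f| is small
    left
    have habs : ∀ i ∈ Finset.range m, |(p:ℚ) ^ (-(s i)) * (L.getD i 1).f| ≤
        |(p:ℚ)| ^ (-(s i)) * Fq := by
      intro i hi
      obtain ⟨g, hgC, hgi⟩ := hmem i (Finset.mem_range.mp hi)
      have habs0 : |(p:ℚ) ^ (-(s i))| = |(p:ℚ)| ^ (-(s i)) := map_zpow₀ (absHom (α := ℚ)) _ _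
      rw [abs_mul, habs0, hgi]
      have h1 : |((g:QZ p)).f| ≤ Fq := hFq g hgC
      have h2 : (0:ℚ) ≤ |(p:ℚ)| ^ (-(s i)) := by positivity
      exact mul_le_mul_of_nonneg_left h1 h2
    have hq1 : |f| ≤ ∑ i ∈ Finset.range m, |(p:ℚ)| ^ (-(s i)) * Fq := by
      calc |f| ≤ ∑ i ∈ Finset.range m, |(p:ℚ) ^ (-(s i)) * (L.getD i 1).f| := by
            rw [hfeq]; exact Finset.abs_sum_le_sum_abs _ _
        _ ≤ _ := Finset.sum_le_sum habs
    have hr1 : ((|f| : ℚ) : ℝ) ≤ (∑ i ∈ Finset.range m, P ^ (-(s i))) * (Fq:ℝ) := by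
      have := (Rat.cast_le (K := ℝ)).mpr hq1
      calc ((|f| : ℚ) : ℝ) ≤ ((∑ i ∈ Finset.range m, |(p:ℚ)| ^ (-(s i)) * Fq : ℚ) : ℝ) := this
        _ = (∑ i ∈ Finset.range m, P ^ (-(s i))) * (Fq:ℝ) := by
            rw [← Finset.sum_mul]
            push_cast
            congr 1
            apply Finset.sum_congr rfl
            intro i _
            congr 1
    have hsum_le : ∑ i ∈ Finset.range m, P ^ (-(s i)) ≤ ∑ i ∈ Finset.range (m+1), P ^ (-(s i)) := by
      apply Finset.sum_le_sum_of_subset_of_nonneg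
      · exact Finset.range_subset_range.mpr (by omega)
      · intro i _ _; positivity
    have hexp : ((m:ℝ) * c)/2 - (B:ℝ) ≤ ((n:ℝ) * (c:ℝ))/4 := by
      have h1 : ((m:ℤ)*c : ℝ) ≤ ((4*B : ℤ) : ℝ) := by exact_mod_cast hcase
      have h2 : ((m:ℤ):ℝ) ≤ ((n:ℤ):ℝ) := by exact_mod_cast hmn
      have h3 : (0:ℝ) ≤ ((c:ℤ):ℝ) := by exact_mod_cast hc0
      push_cast at h1 h2 h3 ⊢
      nlinarith
    calc ((|f| : ℚ) : ℝ) ≤ (∑ i ∈ Finset.range m, P ^ (-(s i))) * (Fq:ℝ) := hr1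
      _ ≤ (8 * P ^ (((m:ℝ) * c)/2 - (B:ℝ))) * (Fq:ℝ) := by
          apply mul_le_mul_of_nonneg_right _ (by exact_mod_cast hFq0)
          exact le_trans hsum_le hcore
      _ ≤ (8 * P ^ (((n:ℝ) * (c:ℝ))/4)) * (Fq:ℝ) := by
          apply mul_le_mul_of_nonneg_right _ (by exact_mod_cast hFq0)
          have := hexp_mono _ _ hexp
          linarith
      _ = 8 * (Fq:ℝ) * P ^ (((n:ℝ) * (c:ℝ))/4) := by ring
      _ ≤ M * P ^ (((n:ℝ) * (c:ℝ))/4) := by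
          apply mul_le_mul_of_nonneg_right hM8 (le_of_lt hrpow_pos)
  · -- denominator is small
    right
    push_neg at hcase
    -- integers m_i
    set fs : ℕ → ℚ := fun i => (L.getD i 1).f with hfsdef
    have hDi : ∀ i < m, denomExp p (fs i) ≤ D := by
      intro i hi
      obtain ⟨g, hgC, hgi⟩ := hmem i hi
      rw [hfsdef]
      simp only [hgi]
      exact hD g hgC
    have hmi : ∀ i : ℕ, ∃ mm : ℤ, (p:ℚ)^(denomExp p (fs i)) * fs i = mm := by
      intro i
      by_cases hi : i < m
      · obtain ⟨g, hgC, hgi⟩ := hmem i hi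
        apply exists_denomExp hpne
        rw [hfsdef]
        simp only [hgi]
        exact g.2
      · refine ⟨0, ?_⟩
        have h1 : L.getD i 1 = 1 := List.getD_eq_default _ _ (by omega)
        have h0 : fs i = 0 := by
          show (L.getD i 1).f = 0
          rw [h1, one_f]
        rw [h0]
        simp
    choose mi hmi using hmi
    set ei : ℕ → ℕ := fun i => (B - s i).toNat + (D - denomExp p (fs i)) with heidef
    have hwitness : (p:ℚ)^(D + B.toNat) * f = ((∑ i ∈ Finset.range m, (p : ℤ) ^ (ei i) * mi i : ℤ) : ℚ) := by
      rw [hfeq, Finset.mul_sum]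
      push_cast
      apply Finset.sum_congr rfl
      intro i hi
      have hsiB : s i ≤ B := hB i (le_of_lt (Finset.mem_range.mp hi))
      have hdi : denomExp p (fs i) ≤ D := hDi i (Finset.mem_range.mp hi)
      have hexpeq : ((D + B.toNat : ℕ):ℤ) + (-(s i)) = ((ei i + denomExp p (fs i) : ℕ) : ℤ) := by
        rw [heidef]
        push_cast
        omega
      calc (p:ℚ)^(D + B.toNat) * ((p:ℚ) ^ (-(s i)) * (L.getD i 1).f)
          = (p:ℚ)^(((D + B.toNat : ℕ):ℤ) + (-(s i))) * fs i := by
            rw [zpow_add₀ hpne, zpow_natCast, hfsdef]; ring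
        _ = (p:ℚ)^(((ei i + denomExp p (fs i) : ℕ) : ℤ)) * fs i := by rw [hexpeq]
        _ = (p:ℚ)^(ei i) * ((p:ℚ)^(denomExp p (fs i)) * fs i) := by
            rw [zpow_natCast, pow_add]; ring
        _ = (p:ℚ)^(ei i) * (mi i : ℚ) := by rw [hmi i]
    have hdle : denomExp p f ≤ D + B.toNat :=
      Nat.sInf_le ⟨_, hwitness⟩
    have hdenom : ((denom p f : ℚ) : ℝ) = P ^ (denomExp p f : ℕ) := by
      rw [denom, hPdef]
      push_cast
      rfl
    have hBle : ((B.toNat : ℕ) : ℝ) ≤ ((n:ℝ) * (c:ℝ))/4 := by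
      have h1 : ((4*B : ℤ) : ℝ) ≤ ((m:ℤ)*c : ℝ) := by exact_mod_cast le_of_lt hcase
      have h2 : ((m:ℤ):ℝ) ≤ ((n:ℤ):ℝ) := by exact_mod_cast hmn
      have h3 : (0:ℝ) ≤ ((c:ℤ):ℝ) := by exact_mod_cast hc0
      have h4 : ((B.toNat : ℕ) : ℤ) = B := Int.toNat_of_nonneg hB0
      have h5 : ((B.toNat : ℕ) : ℝ) = ((B:ℤ) : ℝ) := by exact_mod_cast h4
      push_cast at h1 h2 h3 h5 ⊢
      rw [h5]
      nlinarith
    calc ((denom p f : ℚ) : ℝ) = P ^ (denomExp p f : ℕ) := hdenom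
      _ ≤ P ^ (D + B.toNat) := by
          apply pow_le_pow_right₀ hP1 hdle
      _ = P ^ (D:ℕ) * P ^ (B.toNat : ℕ) := pow_add P D B.toNat
      _ ≤ P ^ (D:ℕ) * P ^ (((n:ℝ) * (c:ℝ))/4) := by
          apply mul_le_mul_of_nonneg_left _ (by positivity)
          rw [← Real.rpow_natCast P B.toNat]
          exact hexp_mono _ _ hBle
      _ ≤ M * P ^ (((n:ℝ) * (c:ℝ))/4) := by
          apply mul_le_mul_of_nonneg_right hMD (le_of_lt hrpow_pos)


end BS
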